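/- Suppose in addition that all the integers a_n and b_n (n ≥ 1) are even, and let (e_i)_{i≥0} satisfy the Read relations. Let S₂ : ℓ¹ → ℓ¹ be the continuous linear operator with S₂ f_i = f_i for even i and S₂ f_i = 0 for odd i, and let T : ℓ¹ → ℓ¹ be a continuous linear operator with T e_i = e_{i+1} for all i ≥ 0. Then T² ∘ S₂ = S₂ ∘ T² on all of ℓ¹. -/
import Mathlib


/-- The real Banach space ℓ¹ of absolutely summable real sequences. -/
abbrev L1 : Type := lp (fun _ : ℕ => ℝ) 1

/-- The standard unit vectors of ℓ¹. -/
noncomputable def f (i : ℕ) : L1 := lp.single 1 i 1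

/-- The dense subspace `F` of ℓ¹ spanned by the standard unit vectors. -/
noncomputable def F : Submodule ℝ L1 := Submodule.span ℝ (Set.range f)

/-- `v n = n * (a n + b n)`; note `v 0 = 0`. -/
def v (a b : ℕ → ℕ) (n : ℕ) : ℕ := n * (a n + b n)

/-- The sequence `e` satisfies C. J. Read's relations (0), (A), (B), (C), (D). -/
noncomputable def ReadRelations (a b : ℕ → ℕ) (e : ℕ → L1) : Prop :=
  -- (0)
  e 0 = f 0 ∧
  -- (A)
  (∀ r n i : ℕ, 0 < r → r ≤ n → r * a n ≤ i → i ≤ r * a n + v a b (n - r) →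
    f i = (a (n - r) : ℝ) • (e i - e (i - r * a n))) ∧
  -- (B), first case
  (∀ r n i : ℕ, 1 ≤ r → r < n → r * a n + v a b (n - r) < i → i < (r + 1) * a n →
    f i = ((2 : ℝ) ^ ((((r : ℝ) + 1 / 2) * (a n : ℝ) - (i : ℝ)) / Real.sqrt (a n))) • e i) ∧
  -- (B), second case
  (∀ n i : ℕ, 1 ≤ n → v a b (n - 1) < i → i < a n →
    f i = ((2 : ℝ) ^ (((a n : ℝ) / 2 - (i : ℝ)) / Real.sqrt (a n))) • e i) ∧
  -- (C)
  (∀ r n i : ℕ, 1 ≤ r → r ≤ n → r * (a n + b n) ≤ i → i ≤ n * a n + r * b n →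
    f i = e i - (b n : ℝ) • e (i - b n)) ∧
  -- (D)
  (∀ r n i : ℕ, r < n → n * a n + r * b n < i → i < (r + 1) * (a n + b n) →
    f i = ((2 : ℝ) ^ ((((r : ℝ) + 1 / 2) * (b n : ℝ) - (i : ℝ)) / Real.sqrt (b n))) • e i)


set_option linter.unusedSectionVars false
set_option linter.unusedVariables false
set_option maxHeartbeats 800000

lemma dense_F : Dense (F : Set L1) := fun x => by
  have h : HasSum (fun i : ℕ => lp.single 1 i (x i)) x :=
    lp.hasSum_single (by norm_num) x
  refine mem_closure_of_tendsto h.tendsto_sum_nat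
    (Filter.Eventually.of_forall fun s => ?_)
  refine Submodule.sum_mem _ fun i _ => ?_
  have hsingle : lp.single 1 i (x i) = (x i) • f i := by
    rw [f, ← lp.single_smul, smul_eq_mul, mul_one]
  rw [hsingle]
  exact Submodule.smul_mem _ _ (Submodule.subset_span ⟨i, rfl⟩)

section Read
variable {a b : ℕ → ℕ}
variable (ha0 : a 0 = 1) (hpos : 0 < a 1)
    (hab : ∀ n, 1 ≤ n → a n < b n)
    (hba : ∀ n, 1 ≤ n → b n < a (n + 1))

include ha0 hpos hab hba

lemma a_pos : ∀ n, 0 < a n := by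
  intro n
  induction n with
  | zero => omega
  | succ k ih =>
    rcases Nat.eq_zero_or_pos k with h | hk
    · subst h; exact hpos
    · have h1 := hab k hk
      have h2 := hba k hk
      omega

lemma a_mono : ∀ m n : ℕ, m ≤ n → a m ≤ a n := by
  intro m n h
  induction n, h using Nat.le_induction with
  | base => exact le_refl _
  | succ k hk ih =>
    have hstep : a k ≤ a (k + 1) := by
      rcases Nat.eq_zero_or_pos k with h0 | h1
      · subst h0; rw [ha0]; exact hpos
      · have h2 := hab k h1
        have h3 := hba k h1
        omega
    omega

lemma b_pos : ∀ n, 1 ≤ n → 0 < b n := by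
  intro n hn
  have := a_pos ha0 hpos hab hba n
  have := hab n hn
  omega

lemma b_mono : ∀ m n : ℕ, 1 ≤ m → m ≤ n → b m ≤ b n := by
  intro m n hm h
  induction n, h using Nat.le_induction with
  | base => exact le_refl _
  | succ k hk ih =>
    have h1 : 1 ≤ k := le_trans hm hk
    have h2 := hba k h1
    have h3 := hab (k+1) (by omega)
    omega

lemma v_mono : ∀ m n : ℕ, m ≤ n → v a b m ≤ v a b n := by
  intro m n h
  rcases Nat.eq_zero_or_pos m with h0 | h1
  · subst h0; simp [v]
  · have hn : 1 ≤ n := le_trans h1 h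
    have := a_mono ha0 hpos hab hba m n h
    have := b_mono ha0 hpos hab hba m n h1 h
    exact Nat.mul_le_mul h (by omega)

lemma le_v_self : ∀ i : ℕ, i ≤ v a b i := by
  intro i
  have := a_pos ha0 hpos hab hba i
  calc i = i * 1 := (mul_one i).symm
    _ ≤ i * (a i + b i) := Nat.mul_le_mul_left i (by omega)


lemma cover
    (hga : ∀ n, 1 ≤ n → v a b (n - 1) < a n)
    (hgb : ∀ n, 1 ≤ n → n * a n < b n)
    (heven : ∀ n, 1 ≤ n → Even (a n) ∧ Even (b n))
    (e : ℕ → L1) (he : ReadRelations a b e) :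
    ∀ i : ℕ, 1 ≤ i →
      (∃ c : ℝ, c ≠ 0 ∧ f i = c • e i) ∨
      (∃ c d : ℝ, ∃ j : ℕ, c ≠ 0 ∧ j < i ∧ (Even j ↔ Even i) ∧
        f i = c • e i + d • e j) := by
  obtain ⟨he0, heA, heB1, heB2, heC, heD⟩ := he
  intro i hi
  have hex : ∃ n, i ≤ v a b n := ⟨i, le_v_self ha0 hpos hab hba i⟩
  set n := Nat.find hex with hn_def
  have hivn : i ≤ v a b n := Nat.find_spec hex
  have hn1 : 1 ≤ n := by
    rcases Nat.eq_zero_or_pos n with h0 | h1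
    · exfalso; rw [h0] at hivn; simp [v] at hivn; omega
    · exact h1
  have hprev : v a b (n - 1) < i := by
    have := Nat.find_min hex (m := n - 1) (by omega)
    omega
  have hA1 : 0 < a n := a_pos ha0 hpos hab hba n
  have hBn : n * a n < b n := hgb n hn1
  obtain ⟨hae, hbe⟩ := heven n hn1
  rcases lt_or_ge i (a n) with hcase1 | hcase2
  · left
    exact ⟨_, ne_of_gt (Real.rpow_pos_of_pos (by norm_num) _), heB2 n i hn1 hprev hcase1⟩
  rcases le_or_gt i (n * a n) with hcase2' | hcase3
  · -- a n ≤ i ≤ n * a n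
    set r := i / a n with hr_def
    have hrle : r * a n ≤ i := Nat.div_mul_le_self i (a n)
    have hrlt : i < (r + 1) * a n :=
      (Nat.div_lt_iff_lt_mul hA1).mp (Nat.lt_succ_self r)
    have hr1 : 1 ≤ r := by
      rw [hr_def]; exact (Nat.one_le_div_iff hA1).mpr hcase2
    have hrn : r ≤ n := by
      by_contra hcon
      push_neg at hcon
      have h1 : (n + 1) * a n ≤ r * a n := Nat.mul_le_mul_right _ hcon
      have h2 : (n + 1) * a n = n * a n + a n := by ring
      omega
    rcases le_or_gt i (r * a n + v a b (n - r)) with hsub | hsub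
    · right
      have hfi := heA r n i hr1 hrn hrle hsub
      refine ⟨(a (n - r) : ℝ), -(a (n - r) : ℝ), i - r * a n, ?_, ?_, ?_, ?_⟩
      · exact_mod_cast (a_pos ha0 hpos hab hba (n - r)).ne'
      · exact Nat.sub_lt (by omega) (Nat.mul_pos hr1 hA1)
      · have hre : Even (r * a n) := hae.mul_left r
        rw [Nat.even_sub hrle]
        simp [hre]
      · rw [hfi]; module
    · have hrn' : r < n := by
        rcases Nat.lt_or_ge r n with h | h
        · exact h
        · exfalso
          have hreq : r = n := le_antisymm hrn h
          rw [hreq] at hsub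
          simp [v] at hsub
          omega
      left
      exact ⟨_, ne_of_gt (Real.rpow_pos_of_pos (by norm_num) _),
        heB1 r n i hr1 hrn' hsub hrlt⟩
  · -- n * a n < i ≤ v n
    set r := i / (a n + b n) with hr_def
    have hab0 : 0 < a n + b n := by omega
    have hrle : r * (a n + b n) ≤ i := Nat.div_mul_le_self _ _
    have hrlt : i < (r + 1) * (a n + b n) :=
      (Nat.div_lt_iff_lt_mul hab0).mp (Nat.lt_succ_self r)
    have hrn : r ≤ n := by
      have h1 : i / (a n + b n) ≤ (n * (a n + b n)) / (a n + b n) :=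
        Nat.div_le_div_right (by simpa [v] using hivn)
      rwa [Nat.mul_div_cancel n hab0] at h1
    by_cases hsub : 1 ≤ r ∧ i ≤ n * a n + r * b n
    · right
      obtain ⟨hr1, hile⟩ := hsub
      have hfi := heC r n i hr1 hrn hrle hile
      have hbi : b n ≤ i :=
        le_trans (le_trans (Nat.le_add_left _ _) (Nat.le_mul_of_pos_left _ hr1)) hrle
      refine ⟨1, -(b n : ℝ), i - b n, one_ne_zero, ?_, ?_, ?_⟩
      · exact Nat.sub_lt (by omega) (by omega)
      · rw [Nat.even_sub hbi]; simp [hbe]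
      · rw [hfi]; module
    · push_neg at hsub
      have hgt : n * a n + r * b n < i := by
        rcases Nat.eq_zero_or_pos r with h0 | h1
        · rw [h0]; simpa using hcase3
        · exact hsub h1
      have hrn' : r < n := by
        by_contra hcon
        push_neg at hcon
        have hreq : r = n := le_antisymm hrn hcon
        have hv : v a b n = n * a n + n * b n := by rw [v]; ring
        rw [hreq] at hgt
        omega
      left
      exact ⟨_, ne_of_gt (Real.rpow_pos_of_pos (by norm_num) _),
        heD r n i hrn' hgt hrlt⟩


lemma S2e
    (hga : ∀ n, 1 ≤ n → v a b (n - 1) < a n)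
    (hgb : ∀ n, 1 ≤ n → n * a n < b n)
    (heven : ∀ n, 1 ≤ n → Even (a n) ∧ Even (b n))
    (e : ℕ → L1) (he : ReadRelations a b e)
    (S₂ : L1 →L[ℝ] L1)
    (hS₂ : ∀ i : ℕ, S₂ (f i) = if Even i then f i else 0) :
    ∀ i, S₂ (e i) = if Even i then e i else 0 := by
  intro i
  induction i using Nat.strong_induction_on with
  | _ i ih =>
    rcases Nat.eq_zero_or_pos i with h0 | h1
    · subst h0
      rw [he.1, hS₂ 0]
    · rcases cover ha0 hpos hab hba hga hgb heven e he i h1 with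
        ⟨c, hc, hfi⟩ | ⟨c, d, j, hc, hji, hpar, hfi⟩
      · have h := hS₂ i
        rw [hfi, map_smul] at h
        by_cases hev : Even i
        · rw [if_pos hev] at h ⊢
          exact smul_right_injective L1 hc h
        · rw [if_neg hev] at h ⊢
          exact (smul_eq_zero.mp h).resolve_left hc
      · have h := hS₂ i
        rw [hfi, map_add, map_smul, map_smul, ih j hji] at h
        by_cases hev : Even i
        · rw [if_pos hev] at h ⊢
          rw [if_pos (hpar.mpr hev)] at h
          exact smul_right_injective L1 hc (add_right_cancel h)
        · rw [if_neg hev] at h ⊢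
          rw [if_neg (fun hj => hev (hpar.mp hj)), smul_zero, add_zero] at h
          exact (smul_eq_zero.mp h).resolve_left hc

end Read

/-- If all `aₙ` and `bₙ` are even, `(eᵢ)` satisfies the Read relations, `S₂` is the
continuous operator with `S₂ fᵢ = fᵢ` for even `i` and `S₂ fᵢ = 0` for odd `i`, and
`T` is a continuous operator with `T eᵢ = e_{i+1}`, then `T² ∘ S₂ = S₂ ∘ T²`. -/
theorem read_operator_sq_commutes_with_even_projection
    (a b : ℕ → ℕ)
    (ha0 : a 0 = 1)
    (hpos : 0 < a 1)
    (hab : ∀ n, 1 ≤ n → a n < b n)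
    (hba : ∀ n, 1 ≤ n → b n < a (n + 1))
    (hga : ∀ n, 1 ≤ n → v a b (n - 1) < a n)
    (hgb : ∀ n, 1 ≤ n → n * a n < b n)
    (heven : ∀ n, 1 ≤ n → Even (a n) ∧ Even (b n))
    (e : ℕ → L1) (heF : ∀ i, e i ∈ F) (he : ReadRelations a b e)
    (S₂ : L1 →L[ℝ] L1)
    (hS₂ : ∀ i : ℕ, S₂ (f i) = if Even i then f i else 0)
    (T : L1 →L[ℝ] L1)
    (hT : ∀ i : ℕ, T (e i) = e (i + 1)) :
    (T ^ 2).comp S₂ = S₂.comp (T ^ 2) := by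
  have hS2e := S2e ha0 hpos hab hba hga hgb heven e he S₂ hS₂
  have hEdense :
      Dense ((Submodule.span ℝ (Set.range e) : Submodule ℝ L1) : Set L1) := by
    refine Dense.mono ?_ dense_F
    refine SetLike.coe_subset_coe.mpr (Submodule.span_le.mpr ?_)
    rintro _ ⟨i, rfl⟩
    rcases Nat.eq_zero_or_pos i with h0 | h1
    · subst h0
      rw [← he.1]
      exact Submodule.subset_span ⟨0, rfl⟩
    · rcases cover ha0 hpos hab hba hga hgb heven e he i h1 with
        ⟨c, _, hfi⟩ | ⟨c, d, j, _, _, _, hfi⟩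
      · rw [hfi]
        exact Submodule.smul_mem _ _ (Submodule.subset_span ⟨i, rfl⟩)
      · rw [hfi]
        exact Submodule.add_mem _
          (Submodule.smul_mem _ _ (Submodule.subset_span ⟨i, rfl⟩))
          (Submodule.smul_mem _ _ (Submodule.subset_span ⟨j, rfl⟩))
  refine ContinuousLinearMap.ext_on hEdense ?_
  rintro _ ⟨i, rfl⟩
  have hT2 : ∀ k, (T ^ 2) (e k) = e (k + 2) := fun k => by
    rw [pow_two, ContinuousLinearMap.mul_apply, hT, hT]
  have hiff : Even (i + 2) ↔ Even i := by simp [Nat.even_add]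
  simp only [ContinuousLinearMap.comp_apply]
  rw [hS2e i, hT2 i, hS2e (i + 2)]
  by_cases hev : Even i
  · rw [if_pos hev, if_pos (hiff.mpr hev), hT2 i]
  · rw [if_neg hev, if_neg (fun h => hev (hiff.mp h)), map_zero]
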